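/- (Generalized completion-of-squares.) Let ψ₁, ψ₂ : ℝ^p → ℝ be strictly convex differentiable functions with Bregman divergences D_{ψ₁}, D_{ψ₂}, and let w₁, w₂ ∈ ℝ^p. If w⋆ ∈ ℝ^p satisfies ∇(ψ₁ + ψ₂)(w⋆) = ∇ψ₁(w₁) + ∇ψ₂(w₂), then for every w ∈ ℝ^p, D_{ψ₁}(w, w₁) + D_{ψ₂}(w, w₂) = D_{ψ₁}(w⋆, w₁) + D_{ψ₂}(w⋆, w₂) + D_{ψ₁+ψ₂}(w, w⋆). Moreover, such a w⋆ is unique: if w⋆ and w⋆' both satisfy the gradient equation, then w⋆ = w⋆'. -/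

import Mathlib

open RealInnerProductSpace


-- gradient injectivity for strictly convex differentiable function
lemma gradient_injective_of_strictConvex {p : ℕ}
    (f : EuclideanSpace ℝ (Fin p) → ℝ) (hd : Differentiable ℝ f)
    (hc : StrictConvexOn ℝ Set.univ f) {x y : EuclideanSpace ℝ (Fin p)}
    (h : gradient f x = gradient f y) : x = y := by
  by_contra hxy
  set d : EuclideanSpace ℝ (Fin p) := y - x with hdd
  have hd0 : d ≠ 0 := sub_ne_zero.mpr (Ne.symm hxy)
  set g : ℝ → ℝ := fun t => f (x + t • d) with hg
  have hline : ∀ t : ℝ, HasDerivAt (fun t : ℝ => x + t • d) d t := by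
    intro t
    simpa using ((hasDerivAt_id t).smul_const d).const_add x
  have hderiv : ∀ t : ℝ, HasDerivAt g ⟪gradient f (x + t • d), d⟫ t := by
    intro t
    have h1 : HasFDerivAt f
        (InnerProductSpace.toDual ℝ _ (gradient f (x + t • d))) (x + t • d) :=
      ((hd _).hasGradientAt).hasFDerivAt
    refine (h1.comp_hasDerivAt t (hline t)).congr_deriv ?_
    simp
  have hgconv : StrictConvexOn ℝ Set.univ g := by
    refine ⟨convex_univ, ?_⟩
    intro s _ t _ hst a b ha hb hab
    have hkey : x + (a * s + b * t) • d = a • (x + s • d) + b • (x + t • d) := by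
      have hx : a • x + b • x = x := by rw [← add_smul, hab, one_smul]
      rw [smul_add, smul_add, smul_smul, smul_smul, add_smul]
      conv_lhs => rw [← hx]
      abel
    have hne : x + s • d ≠ x + t • d := by
      intro hcontra
      apply hst
      have := add_left_cancel hcontra
      have h2 : (s - t) • d = 0 := by rw [sub_smul, this, sub_self]
      rcases smul_eq_zero.mp h2 with h3 | h3
      · linarith [sub_eq_zero.mp (by exact_mod_cast h3)]
      · exact absurd h3 hd0
    have := hc.2 (Set.mem_univ (x + s • d)) (Set.mem_univ (x + t • d)) hne ha hb hab
    simpa [hg, hkey] using this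
  have hmono := hgconv.strictMonoOn_deriv (fun t _ => (hderiv t).differentiableAt)
  have h01 := hmono (Set.mem_univ (0:ℝ)) (Set.mem_univ (1:ℝ)) one_pos
  rw [(hderiv 0).deriv, (hderiv 1).deriv] at h01
  simp only [zero_smul, add_zero, one_smul] at h01
  have hxyd : x + d = y := by simp [hdd]
  rw [hxyd, h] at h01
  exact lt_irrefl _ h01

lemma gradient_add' {p : ℕ} (f g : EuclideanSpace ℝ (Fin p) → ℝ)
    (hf : Differentiable ℝ f) (hg : Differentiable ℝ g) (x : EuclideanSpace ℝ (Fin p)) :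
    gradient (fun w => f w + g w) x = gradient f x + gradient g x := by
  unfold gradient
  rw [fderiv_fun_add (hf x) (hg x), map_add]


/-- Bregman divergence of a differentiable function `ψ`. -/
noncomputable def bregman {p : ℕ} (ψ : EuclideanSpace ℝ (Fin p) → ℝ)
    (w w' : EuclideanSpace ℝ (Fin p)) : ℝ :=
  ψ w - ψ w' - ⟪gradient ψ w', w - w'⟫

/-- Generalized completion-of-squares for Bregman divergences, together with the
uniqueness of the "center" `w⋆`. -/
theorem bregman_completion_of_squares {p : ℕ}
    (ψ₁ ψ₂ : EuclideanSpace ℝ (Fin p) → ℝ)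
    (hψ₁diff : Differentiable ℝ ψ₁) (hψ₂diff : Differentiable ℝ ψ₂)
    (hψ₁conv : StrictConvexOn ℝ Set.univ ψ₁)
    (hψ₂conv : StrictConvexOn ℝ Set.univ ψ₂)
    (w₁ w₂ wstar : EuclideanSpace ℝ (Fin p))
    (hstar : gradient (fun w => ψ₁ w + ψ₂ w) wstar
        = gradient ψ₁ w₁ + gradient ψ₂ w₂) :
    (∀ w : EuclideanSpace ℝ (Fin p),
        bregman ψ₁ w w₁ + bregman ψ₂ w w₂
          = bregman ψ₁ wstar w₁ + bregman ψ₂ wstar w₂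
            + bregman (fun u => ψ₁ u + ψ₂ u) w wstar)
    ∧ (∀ wstar' : EuclideanSpace ℝ (Fin p),
        gradient (fun w => ψ₁ w + ψ₂ w) wstar'
          = gradient ψ₁ w₁ + gradient ψ₂ w₂ → wstar' = wstar) := by
  constructor
  · intro w
    simp only [bregman]
    rw [hstar]
    simp only [inner_add_left, inner_sub_right]
    ring
  · intro wstar' h'
    exact gradient_injective_of_strictConvex _ (hψ₁diff.add hψ₂diff)
      (hψ₁conv.add hψ₂conv) (h'.trans hstar.symm)
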